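/- arXiv:1611.10011 — 5 statements merged into one kernel-verified Lean document; each statement's English description precedes it below -/
import Mathlib

section
/- (Lemma 4.7, deterministic form.) Suppose θ̂ ∈ ℝ^p satisfies ‖θ₀ − θ̂‖₁ ≤ 2‖θ₀‖₁, and set h := θ₀ − θ̂. Then (ν/2) · hᵀ V(θ₀) h ≤ ⟨h, ψ(θ̂) − ψ(θ₀)⟩. -/
open Finset

/-- ℓ₁ norm on `Fin p → ℝ`. -/
noncomputable def l1 {p : ℕ} (v : Fin p → ℝ) : ℝ := ∑ i, |v i|

/-- ℓ₁ norm of the subvector indexed by `T`. -/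
noncomputable def l1on {p : ℕ} (T : Finset (Fin p)) (v : Fin p → ℝ) : ℝ := ∑ i ∈ T, |v i|

/-- ℓ₂ norm on `Fin p → ℝ`. -/
noncomputable def l2 {p : ℕ} (v : Fin p → ℝ) : ℝ := Real.sqrt (∑ i, (v i) ^ 2)

/-- ℓ_∞ norm on `Fin p → ℝ`. -/
noncomputable def linf {p : ℕ} (v : Fin p → ℝ) : ℝ := ⨆ i, |v i|

/-- ℓ_q norm on `Fin p → ℝ` for real `q ≥ 1`. -/
noncomputable def lqnorm {p : ℕ} (q : ℝ) (v : Fin p → ℝ) : ℝ := (∑ i, |v i| ^ q) ^ (1 / q)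

/-- Quadratic form `hᵀ J h`. -/
noncomputable def quadForm {p : ℕ} (J : Matrix (Fin p) (Fin p) ℝ) (h : Fin p → ℝ) : ℝ :=
  ∑ i, ∑ j, h i * J i j * h j

/-- The cone `C_T = {h : ‖h_{Tᶜ}‖₁ ≤ ‖h_T‖₁}`. -/
def cone {p : ℕ} (T : Finset (Fin p)) : Set (Fin p → ℝ) := {h | l1on Tᶜ h ≤ l1on T h}

/-- Compatibility factor `κ(T; J)`. -/
noncomputable def kappa {p : ℕ} (T : Finset (Fin p)) (J : Matrix (Fin p) (Fin p) ℝ) : ℝ :=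
  sInf {r | ∃ h : Fin p → ℝ, h ≠ 0 ∧ h ∈ cone T ∧
    r = Real.sqrt T.card * Real.sqrt (quadForm J h) / l1on T h}

/-- Restricted eigenvalue `RE(T; J)`. -/
noncomputable def RE {p : ℕ} (T : Finset (Fin p)) (J : Matrix (Fin p) (Fin p) ℝ) : ℝ :=
  sInf {r | ∃ h : Fin p → ℝ, h ≠ 0 ∧ h ∈ cone T ∧
    r = Real.sqrt (quadForm J h) / l2 h}

/-- Weak cone invertibility factor at `q = ∞`, `F_∞(T; J)`. -/
noncomputable def Finf {p : ℕ} (T : Finset (Fin p)) (J : Matrix (Fin p) (Fin p) ℝ) : ℝ :=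
  sInf {r | ∃ h : Fin p → ℝ, h ≠ 0 ∧ h ∈ cone T ∧
    r = Real.sqrt (quadForm J h) / linf h}

/-- Weak cone invertibility factor `F_q(T; J)` for `q ∈ [1,∞)`
(with the quadratic form without square root, as in the paper's proofs). -/
noncomputable def Fq {p : ℕ} (q : ℝ) (T : Finset (Fin p)) (J : Matrix (Fin p) (Fin p) ℝ) : ℝ :=
  sInf {r | ∃ h : Fin p → ℝ, h ≠ 0 ∧ h ∈ cone T ∧
    r = (T.card : ℝ) ^ (1 / q) * quadForm J h / (l1on T h * lqnorm q h)}

/-- `g(x) = (e^{2x} - 1)/x` for `x ≠ 0`, `g(0) = 2`. -/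
noncomputable def g (x : ℝ) : ℝ := if x = 0 then 2 else (Real.exp (2 * x) - 1) / x

/-- Gradient of the log-quasi-likelihood (divided by `n`), with `b = 0`, `Δ = 1/n`:
`ψ(θ)_i = (1/(nΔ)) Σ_k z_{k,i}(e^{-2⟨θ,z_k⟩}(x_k - x_{k-1})² - Δ)`. -/
noncomputable def psiD {n p : ℕ} (x : Fin (n + 1) → ℝ) (z : Fin n → Fin p → ℝ)
    (θ : Fin p → ℝ) (i : Fin p) : ℝ :=
  (1 / ((n : ℝ) * (1 / n))) * ∑ k, z k i *
    (Real.exp (-2 * ∑ j, θ j * z k j) * (x k.succ - x k.castSucc) ^ 2 - 1 / n)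

/-- Negative Hessian (divided by `n`):
`V(θ) = (2/(nΔ)) Σ_k e^{-2⟨θ,z_k⟩}(x_k - x_{k-1})² z_k z_kᵀ`. -/
noncomputable def VD {n p : ℕ} (x : Fin (n + 1) → ℝ) (z : Fin n → Fin p → ℝ)
    (θ : Fin p → ℝ) : Matrix (Fin p) (Fin p) ℝ := fun i j =>
  (2 / ((n : ℝ) * (1 / n))) * ∑ k, Real.exp (-2 * ∑ l, θ l * z k l) *
    (x k.succ - x k.castSucc) ^ 2 * z k i * z k j

/-- `J = (2/n) Σ_k z_k z_kᵀ`. -/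
noncomputable def JD {n p : ℕ} (z : Fin n → Fin p → ℝ) : Matrix (Fin p) (Fin p) ℝ :=
  fun i j => (2 / (n : ℝ)) * ∑ k, z k i * z k j

/-- `ε = max_{i,j} |(V(θ) - J)_{ij}|`. -/
noncomputable def epsD {n p : ℕ} (x : Fin (n + 1) → ℝ) (z : Fin n → Fin p → ℝ)
    (θ : Fin p → ℝ) : ℝ :=
  ⨆ i, ⨆ j, |VD x z θ i j - JD z i j|


lemma sum3_aux {n p : ℕ} (c : ℝ) (A : Fin n → ℝ) (w : Fin n → Fin p → ℝ) (h : Fin p → ℝ) :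
    ∑ i, ∑ j, h i * (c * ∑ k, A k * w k i * w k j) * h j
      = c * ∑ k, A k * (∑ i, h i * w k i) ^ 2 := by
  calc ∑ i, ∑ j, h i * (c * ∑ k, A k * w k i * w k j) * h j
      = ∑ i, ∑ j, ∑ k, c * (A k * ((h i * w k i) * (h j * w k j))) := by
        refine Finset.sum_congr rfl fun i _ => Finset.sum_congr rfl fun j _ => ?_
        simp only [Finset.mul_sum, Finset.sum_mul]
        exact Finset.sum_congr rfl fun k _ => by ring
    _ = ∑ i, ∑ k, ∑ j, c * (A k * ((h i * w k i) * (h j * w k j))) :=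
        Finset.sum_congr rfl fun i _ => Finset.sum_comm
    _ = ∑ k, ∑ i, ∑ j, c * (A k * ((h i * w k i) * (h j * w k j))) := Finset.sum_comm
    _ = c * ∑ k, A k * (∑ i, h i * w k i) ^ 2 := by
        rw [Finset.mul_sum]
        refine Finset.sum_congr rfl fun k _ => ?_
        rw [sq, Finset.sum_mul_sum]
        simp only [Finset.mul_sum]

lemma sum2_aux {n p : ℕ} (B : Fin n → ℝ) (w : Fin n → Fin p → ℝ) (h : Fin p → ℝ) :
    ∑ i, h i * ∑ k, w k i * B k = ∑ k, (∑ i, h i * w k i) * B k := by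
  calc ∑ i, h i * ∑ k, w k i * B k
      = ∑ i, ∑ k, (h i * w k i) * B k := by
        refine Finset.sum_congr rfl fun i _ => ?_
        simp only [Finset.mul_sum]
        exact Finset.sum_congr rfl fun k _ => by ring
    _ = ∑ k, ∑ i, (h i * w k i) * B k := Finset.sum_comm
    _ = ∑ k, (∑ i, h i * w k i) * B k :=
        Finset.sum_congr rfl fun k _ => by rw [Finset.sum_mul]

/-- Lemma 4.7 (deterministic form): if `‖θ₀ - θ̂‖₁ ≤ 2‖θ₀‖₁` then with `h := θ₀ - θ̂`,
`(ν/2) hᵀ V(θ₀) h ≤ ⟨h, ψ(θ̂) - ψ(θ₀)⟩`. -/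
theorem lemma_4_7_deterministic
    (n p : ℕ) (hn : 0 < n) (hp : 0 < p)
    (C : ℝ) (hC : 0 < C)
    (x : Fin (n + 1) → ℝ) (z : Fin n → Fin p → ℝ)
    (hz : ∀ k i, |z k i| ≤ C)
    (θ₀ θhat : Fin p → ℝ)
    (hdist : l1 (θ₀ - θhat) ≤ 2 * l1 θ₀)
    (ν : ℝ) (hν : IsLeast (g '' Set.Icc (-(2 * C * l1 θ₀)) (2 * C * l1 θ₀)) ν) :
    ν / 2 * quadForm (VD x z θ₀) (θ₀ - θhat) ≤
      ∑ i, (θ₀ - θhat) i * (psiD x z θhat i - psiD x z θ₀ i) := by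
  have hn0 : (n : ℝ) ≠ 0 := Nat.cast_ne_zero.mpr hn.ne'
  have hn1 : (n : ℝ) * (1 / (n : ℝ)) = 1 := mul_one_div_cancel hn0
  set h : Fin p → ℝ := θ₀ - θhat with hh
  set s : Fin n → ℝ := fun k => ∑ i, h i * z k i with hs
  set E : Fin n → ℝ := fun k =>
    Real.exp (-2 * ∑ l, θ₀ l * z k l) * (x k.succ - x k.castSucc) ^ 2 with hE
  have hE0 : ∀ k, 0 ≤ E k := fun k => mul_nonneg (Real.exp_pos _).le (sq_nonneg _)
  have hsk : ∀ k, |s k| ≤ 2 * C * l1 θ₀ := by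
    intro k
    calc |s k| ≤ ∑ i, |h i * z k i| := Finset.abs_sum_le_sum_abs _ _
      _ ≤ ∑ i, |h i| * C := by
          refine Finset.sum_le_sum fun i _ => ?_
          rw [abs_mul]
          exact mul_le_mul_of_nonneg_left (hz k i) (abs_nonneg _)
      _ = C * l1 h := by rw [l1, ← Finset.sum_mul]; ring
      _ ≤ C * (2 * l1 θ₀) := mul_le_mul_of_nonneg_left hdist hC.le
      _ = 2 * C * l1 θ₀ := by ring
  have key : ∀ t : ℝ, |t| ≤ 2 * C * l1 θ₀ → ν * t ^ 2 ≤ t * (Real.exp (2 * t) - 1) := by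
    intro t ht
    have hmem : t ∈ Set.Icc (-(2 * C * l1 θ₀)) (2 * C * l1 θ₀) := by
      constructor
      · linarith [neg_abs_le t]
      · linarith [le_abs_self t]
    have hν' : ν ≤ g t := hν.2 ⟨t, hmem, rfl⟩
    rcases eq_or_ne t 0 with rfl | ht0
    · simp
    · calc ν * t ^ 2 ≤ g t * t ^ 2 := mul_le_mul_of_nonneg_right hν' (sq_nonneg t)
        _ = t * (Real.exp (2 * t) - 1) := by
            rw [g, if_neg ht0]; field_simp
  have main : ν * ∑ k, E k * s k ^ 2 ≤ ∑ k, E k * (s k * (Real.exp (2 * s k) - 1)) := by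
    rw [Finset.mul_sum]
    refine Finset.sum_le_sum fun k _ => ?_
    calc ν * (E k * s k ^ 2) = E k * (ν * s k ^ 2) := by ring
      _ ≤ E k * (s k * (Real.exp (2 * s k) - 1)) :=
          mul_le_mul_of_nonneg_left (key (s k) (hsk k)) (hE0 k)
  have lhs_eq : quadForm (VD x z θ₀) h = 2 * ∑ k, E k * s k ^ 2 := by
    have h1 : quadForm (VD x z θ₀) h
        = ∑ i, ∑ j, h i * ((2 / ((n : ℝ) * (1 / n))) *
            ∑ k, (Real.exp (-2 * ∑ l, θ₀ l * z k l) * (x k.succ - x k.castSucc) ^ 2)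
              * z k i * z k j) * h j := rfl
    rw [h1, hn1, sum3_aux]
    have h2 : (2 : ℝ) / 1 = 2 := by norm_num
    rw [h2]
  have rhs_eq : ∑ i, h i * (psiD x z θhat i - psiD x z θ₀ i)
      = ∑ k, E k * (s k * (Real.exp (2 * s k) - 1)) := by
    have hexp : ∀ k, Real.exp (-2 * ∑ j, θhat j * z k j)
        = Real.exp (-2 * ∑ l, θ₀ l * z k l) * Real.exp (2 * s k) := by
      intro k
      rw [← Real.exp_add]
      congr 1
      have hsub : s k = (∑ l, θ₀ l * z k l) - ∑ j, θhat j * z k j := by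
        show ∑ i, h i * z k i = _
        simp only [hh, Pi.sub_apply, sub_mul]
        rw [Finset.sum_sub_distrib]
      linarith [hsub]
    have hpsi : ∀ i, psiD x z θhat i - psiD x z θ₀ i
        = ∑ k, z k i * (Real.exp (-2 * ∑ l, θ₀ l * z k l)
            * (x k.succ - x k.castSucc) ^ 2 * (Real.exp (2 * s k) - 1)) := by
      intro i
      unfold psiD
      rw [hn1, one_div_one, one_mul, one_mul, ← Finset.sum_sub_distrib]
      refine Finset.sum_congr rfl fun k _ => ?_
      rw [hexp k]
      ring
    calc ∑ i, h i * (psiD x z θhat i - psiD x z θ₀ i)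
        = ∑ i, h i * ∑ k, z k i * (Real.exp (-2 * ∑ l, θ₀ l * z k l)
            * (x k.succ - x k.castSucc) ^ 2 * (Real.exp (2 * s k) - 1)) :=
          Finset.sum_congr rfl fun i _ => by rw [hpsi i]
      _ = ∑ k, (∑ i, h i * z k i) * (Real.exp (-2 * ∑ l, θ₀ l * z k l)
            * (x k.succ - x k.castSucc) ^ 2 * (Real.exp (2 * s k) - 1)) :=
          sum2_aux _ _ _
      _ = ∑ k, E k * (s k * (Real.exp (2 * s k) - 1)) := by
          refine Finset.sum_congr rfl fun k _ => ?_
          have h1 : (∑ i, h i * z k i) = s k := rfl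
          have h2 : Real.exp (-2 * ∑ l, θ₀ l * z k l) * (x k.succ - x k.castSucc) ^ 2
              = E k := rfl
          rw [h1, h2]; ring
  rw [lhs_eq, rhs_eq]
  linarith [main]
end

section
/- (Basic inequality, from the proof of Theorem 3.1.) Under the Dantzig-selector hypotheses, with h := θ₀ − θ̂, one has hᵀ V(θ₀) h ≤ (4/ν) γ ‖h‖₁ ≤ (8/ν) γ ‖θ₀‖₁. -/
open Finset

section BasicIneqAux

open Finset

private lemma sum_sum_mul_aux (c : ℝ) {m : ℕ} (a b : Fin m → ℝ) :
    ∑ i, ∑ j, c * (a i * b j) = c * ((∑ i, a i) * (∑ j, b j)) := by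
  rw [Finset.sum_mul_sum, Finset.mul_sum]
  exact Finset.sum_congr rfl fun i _ => by rw [Finset.mul_sum]

private lemma quad_eq_aux {n p : ℕ} (hn : 0 < n) (x : Fin (n + 1) → ℝ)
    (z : Fin n → Fin p → ℝ) (θ h : Fin p → ℝ) :
    quadForm (VD x z θ) h =
      2 * ∑ k, Real.exp (-2 * ∑ l, θ l * z k l) * (x k.succ - x k.castSucc) ^ 2 *
        (∑ j, h j * z k j) ^ 2 := by
  have hn' : (n : ℝ) ≠ 0 := Nat.cast_ne_zero.mpr hn.ne'
  have hnΔ : ((n : ℝ) * (1 / n)) = 1 := by field_simp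
  unfold quadForm VD
  rw [hnΔ]
  have step : ∀ i j : Fin p,
      h i * ((2 / 1) * ∑ k, Real.exp (-2 * ∑ l, θ l * z k l) *
        (x k.succ - x k.castSucc) ^ 2 * z k i * z k j) * h j =
      ∑ k, (2 * (Real.exp (-2 * ∑ l, θ l * z k l) * (x k.succ - x k.castSucc) ^ 2)) *
        ((h i * z k i) * (h j * z k j)) := by
    intro i j
    rw [show h i * ((2 / 1) * ∑ k, Real.exp (-2 * ∑ l, θ l * z k l) *
        (x k.succ - x k.castSucc) ^ 2 * z k i * z k j) * h j =
        (∑ k, Real.exp (-2 * ∑ l, θ l * z k l) *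
        (x k.succ - x k.castSucc) ^ 2 * z k i * z k j) * (h i * 2 * h j) by ring,
      Finset.sum_mul]
    exact Finset.sum_congr rfl fun k _ => by ring
  calc (∑ i, ∑ j, h i * ((2 / 1) * ∑ k, Real.exp (-2 * ∑ l, θ l * z k l) *
          (x k.succ - x k.castSucc) ^ 2 * z k i * z k j) * h j)
      = ∑ i, ∑ j, ∑ k, (2 * (Real.exp (-2 * ∑ l, θ l * z k l) *
          (x k.succ - x k.castSucc) ^ 2)) * ((h i * z k i) * (h j * z k j)) := by
        exact Finset.sum_congr rfl fun i _ => Finset.sum_congr rfl fun j _ => step i j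
    _ = ∑ i, ∑ k, ∑ j, (2 * (Real.exp (-2 * ∑ l, θ l * z k l) *
          (x k.succ - x k.castSucc) ^ 2)) * ((h i * z k i) * (h j * z k j)) := by
        exact Finset.sum_congr rfl fun i _ => by rw [Finset.sum_comm]
    _ = ∑ k, ∑ i, ∑ j, (2 * (Real.exp (-2 * ∑ l, θ l * z k l) *
          (x k.succ - x k.castSucc) ^ 2)) * ((h i * z k i) * (h j * z k j)) := by
        rw [Finset.sum_comm]
    _ = 2 * ∑ k, Real.exp (-2 * ∑ l, θ l * z k l) * (x k.succ - x k.castSucc) ^ 2 *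
          (∑ j, h j * z k j) ^ 2 := by
        rw [Finset.mul_sum]
        refine Finset.sum_congr rfl fun k _ => ?_
        rw [sum_sum_mul_aux]
        ring

private lemma pair_eq_aux {n p : ℕ} (hn : 0 < n) (x : Fin (n + 1) → ℝ)
    (z : Fin n → Fin p → ℝ) (θ h : Fin p → ℝ) :
    ∑ i, h i * psiD x z θ i =
      ∑ k, (∑ j, h j * z k j) *
        (Real.exp (-2 * ∑ l, θ l * z k l) * (x k.succ - x k.castSucc) ^ 2 - 1 / n) := by
  have hn' : (n : ℝ) ≠ 0 := Nat.cast_ne_zero.mpr hn.ne'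
  have hnΔ : ((n : ℝ) * (1 / n)) = 1 := by field_simp
  unfold psiD
  rw [hnΔ]
  have step : ∀ i : Fin p,
      h i * ((1 / 1) * ∑ k, z k i *
        (Real.exp (-2 * ∑ j, θ j * z k j) * (x k.succ - x k.castSucc) ^ 2 - 1 / n)) =
      ∑ k, (h i * z k i) *
        (Real.exp (-2 * ∑ l, θ l * z k l) * (x k.succ - x k.castSucc) ^ 2 - 1 / n) := by
    intro i
    rw [show h i * ((1 / 1) * ∑ k, z k i *
        (Real.exp (-2 * ∑ j, θ j * z k j) * (x k.succ - x k.castSucc) ^ 2 - 1 / n)) =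
        (∑ k, z k i *
        (Real.exp (-2 * ∑ j, θ j * z k j) * (x k.succ - x k.castSucc) ^ 2 - 1 / n)) * h i
        by ring,
      Finset.sum_mul]
    exact Finset.sum_congr rfl fun k _ => by ring
  calc (∑ i, h i * ((1 / 1) * ∑ k, z k i *
          (Real.exp (-2 * ∑ j, θ j * z k j) * (x k.succ - x k.castSucc) ^ 2 - 1 / n)))
      = ∑ i, ∑ k, (h i * z k i) *
          (Real.exp (-2 * ∑ l, θ l * z k l) * (x k.succ - x k.castSucc) ^ 2 - 1 / n) :=
        Finset.sum_congr rfl fun i _ => step i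
    _ = ∑ k, ∑ i, (h i * z k i) *
          (Real.exp (-2 * ∑ l, θ l * z k l) * (x k.succ - x k.castSucc) ^ 2 - 1 / n) :=
        Finset.sum_comm
    _ = ∑ k, (∑ j, h j * z k j) *
          (Real.exp (-2 * ∑ l, θ l * z k l) * (x k.succ - x k.castSucc) ^ 2 - 1 / n) := by
        exact Finset.sum_congr rfl fun k _ => (Finset.sum_mul _ _ _).symm

end BasicIneqAux

/-- Basic inequality (from the proof of Theorem 3.1): with `h := θ₀ - θ̂`,
`hᵀ V(θ₀) h ≤ (4/ν) γ ‖h‖₁ ≤ (8/ν) γ ‖θ₀‖₁`. -/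
theorem basic_inequality
    (n p : ℕ) (hn : 0 < n) (hp : 0 < p)
    (C : ℝ) (hC : 0 < C)
    (x : Fin (n + 1) → ℝ) (z : Fin n → Fin p → ℝ)
    (hz : ∀ k i, |z k i| ≤ C)
    (θ₀ θhat : Fin p → ℝ)
    (ν : ℝ) (hν : IsLeast (g '' Set.Icc (-(2 * C * l1 θ₀)) (2 * C * l1 θ₀)) ν)
    (γ : ℝ) (hγ : 0 < γ)
    (hfeas : linf (psiD x z θhat) ≤ γ)
    (hmin : l1 θhat ≤ l1 θ₀)
    (htrue : linf (psiD x z θ₀) ≤ γ) :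
    quadForm (VD x z θ₀) (θ₀ - θhat) ≤ 4 / ν * γ * l1 (θ₀ - θhat) ∧
      4 / ν * γ * l1 (θ₀ - θhat) ≤ 8 / ν * γ * l1 θ₀  := by
  classical
  have hn' : (n : ℝ) ≠ 0 := Nat.cast_ne_zero.mpr hn.ne'
  set h : Fin p → ℝ := θ₀ - θhat with hh
  set u : Fin n → ℝ := fun k => ∑ j, h j * z k j with hu
  set D : Fin n → ℝ := fun k => x k.succ - x k.castSucc with hD
  set E : Fin n → ℝ := fun k => Real.exp (-2 * ∑ l, θ₀ l * z k l) with hE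
  -- positivity of ν
  obtain ⟨⟨t0, _ht0, hgt0⟩, hlb⟩ := hν
  have hν0 : 0 < ν := by
    rw [← hgt0]
    unfold g
    split_ifs with ht
    · norm_num
    · rcases lt_or_gt_of_ne ht with hneg | hpos
      · have h1 : Real.exp (2 * t0) < 1 := by
          rw [show (1 : ℝ) = Real.exp 0 by rw [Real.exp_zero]]
          exact Real.exp_lt_exp.mpr (by linarith)
        exact div_pos_iff.mpr (Or.inr ⟨by linarith, hneg⟩)
      · have h1 : 1 < Real.exp (2 * t0) := by
          rw [show (1 : ℝ) = Real.exp 0 by rw [Real.exp_zero]]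
          exact Real.exp_lt_exp.mpr (by linarith)
        exact div_pos (by linarith) hpos
  -- l1 bounds
  have hl1_nonneg : 0 ≤ l1 h := Finset.sum_nonneg fun i _ => abs_nonneg _
  have hl1 : l1 h ≤ 2 * l1 θ₀ := by
    have step : ∀ i : Fin p, |h i| ≤ |θ₀ i| + |θhat i| := by
      intro i
      rw [hh]
      simpa [Pi.sub_apply, sub_eq_add_neg] using
        (abs_add_le (θ₀ i) (-(θhat i))).trans (by rw [abs_neg])
    calc l1 h ≤ ∑ i, (|θ₀ i| + |θhat i|) := Finset.sum_le_sum fun i _ => step i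
      _ = l1 θ₀ + l1 θhat := by rw [Finset.sum_add_distrib]; rfl
      _ ≤ 2 * l1 θ₀ := by unfold l1 at hmin ⊢; linarith
  -- |u k| bound, hence membership in the interval
  have hu_mem : ∀ k, u k ∈ Set.Icc (-(2 * C * l1 θ₀)) (2 * C * l1 θ₀) := by
    intro k
    have habs : |u k| ≤ 2 * C * l1 θ₀ := by
      calc |u k| ≤ ∑ j, |h j * z k j| := Finset.abs_sum_le_sum_abs _ _
        _ ≤ ∑ j, |h j| * C := by
            refine Finset.sum_le_sum fun j _ => ?_
            rw [abs_mul]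
            exact mul_le_mul_of_nonneg_left (hz k j) (abs_nonneg _)
        _ = C * l1 h := by rw [← Finset.sum_mul]; unfold l1; ring
        _ ≤ C * (2 * l1 θ₀) := mul_le_mul_of_nonneg_left hl1 hC.le
        _ = 2 * C * l1 θ₀ := by ring
    exact Set.mem_Icc.mpr (abs_le.mp habs)
  -- pointwise key inequality
  have hkey : ∀ k, ν * (u k) ^ 2 ≤ u k * (Real.exp (2 * u k) - 1) := by
    intro k
    have hg : ν ≤ g (u k) := hlb ⟨u k, hu_mem k, rfl⟩
    rcases eq_or_ne (u k) 0 with h0 | h0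
    · simp [h0]
    · rw [g, if_neg h0] at hg
      have heq : (Real.exp (2 * u k) - 1) / u k * (u k) ^ 2
          = u k * (Real.exp (2 * u k) - 1) := by field_simp
      calc ν * (u k) ^ 2 ≤ (Real.exp (2 * u k) - 1) / u k * (u k) ^ 2 :=
            mul_le_mul_of_nonneg_right hg (sq_nonneg _)
        _ = u k * (Real.exp (2 * u k) - 1) := heq
  -- the inner product S
  have hpair1 := pair_eq_aux hn x z θhat h
  have hpair0 := pair_eq_aux hn x z θ₀ h
  have hEhat : ∀ k, Real.exp (-2 * ∑ l, θhat l * z k l) = E k * Real.exp (2 * u k) := by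
    intro k
    rw [hE, ← Real.exp_add]
    congr 1
    have hsum : ∑ l, h l * z k l = (∑ l, θ₀ l * z k l) - ∑ l, θhat l * z k l := by
      rw [← Finset.sum_sub_distrib]
      exact Finset.sum_congr rfl fun l _ => by rw [hh]; simp [Pi.sub_apply]; ring
    have : u k = (∑ l, θ₀ l * z k l) - ∑ l, θhat l * z k l := by rw [hu]; exact hsum
    linarith [this]
  have hS_eq : (∑ i, h i * psiD x z θhat i) - ∑ i, h i * psiD x z θ₀ i
      = ∑ k, E k * (D k) ^ 2 * (u k * (Real.exp (2 * u k) - 1)) := by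
    rw [hpair1, hpair0, ← Finset.sum_sub_distrib]
    refine Finset.sum_congr rfl fun k _ => ?_
    rw [hEhat k]
    ring
  -- lower bound for S
  have hS_lower : ν * ∑ k, E k * (D k) ^ 2 * (u k) ^ 2
      ≤ (∑ i, h i * psiD x z θhat i) - ∑ i, h i * psiD x z θ₀ i := by
    rw [hS_eq, Finset.mul_sum]
    refine Finset.sum_le_sum fun k _ => ?_
    have hED : 0 ≤ E k * (D k) ^ 2 := mul_nonneg (Real.exp_pos _).le (sq_nonneg _)
    calc ν * (E k * (D k) ^ 2 * (u k) ^ 2)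
        = E k * (D k) ^ 2 * (ν * (u k) ^ 2) := by ring
      _ ≤ E k * (D k) ^ 2 * (u k * (Real.exp (2 * u k) - 1)) :=
          mul_le_mul_of_nonneg_left (hkey k) hED
  -- upper bound for S
  have habs_psi : ∀ θ' : Fin p → ℝ, linf (psiD x z θ') ≤ γ →
      |∑ i, h i * psiD x z θ' i| ≤ γ * l1 h := by
    intro θ' hθ'
    calc |∑ i, h i * psiD x z θ' i| ≤ ∑ i, |h i * psiD x z θ' i| :=
          Finset.abs_sum_le_sum_abs _ _
      _ ≤ ∑ i, |h i| * γ := by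
          refine Finset.sum_le_sum fun i _ => ?_
          rw [abs_mul]
          refine mul_le_mul_of_nonneg_left ?_ (abs_nonneg _)
          calc |psiD x z θ' i| ≤ linf (psiD x z θ') := by
                unfold linf
                exact le_ciSup (f := fun j => |psiD x z θ' j|)
                  (Set.Finite.bddAbove (Set.finite_range _)) i
            _ ≤ γ := hθ'
      _ = γ * l1 h := by rw [← Finset.sum_mul]; unfold l1; ring
  have hS_upper : (∑ i, h i * psiD x z θhat i) - ∑ i, h i * psiD x z θ₀ i
      ≤ 2 * γ * l1 h := by
    have h1 := (abs_le.mp (habs_psi θhat hfeas)).2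
    have h2 := (abs_le.mp (habs_psi θ₀ htrue)).1
    linarith
  -- combine
  have hquad := quad_eq_aux hn x z θ₀ h
  have hmain : quadForm (VD x z θ₀) h ≤ 4 / ν * γ * l1 h := by
    rw [show 4 / ν * γ * l1 h = 4 * (γ * l1 h) / ν by ring, le_div_iff₀ hν0, hquad]
    have : ν * ∑ k, E k * (D k) ^ 2 * (u k) ^ 2 ≤ 2 * γ * l1 h := hS_lower.trans hS_upper
    nlinarith [this]
  refine ⟨hmain, ?_⟩
  have hcoef : 0 ≤ 4 / ν * γ := mul_nonneg (div_nonneg (by norm_num) hν0.le) hγ.le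
  calc 4 / ν * γ * l1 h ≤ 4 / ν * γ * (2 * l1 θ₀) := mul_le_mul_of_nonneg_left hl1 hcoef
    _ = 8 / ν * γ * l1 θ₀ := by ring
end

section
/- (Key quadratic-form bound, from the proof of Theorem 3.1.) Under the Dantzig-selector hypotheses, with h := θ₀ − θ̂, K₂ := (8/ν)‖θ₀‖₁ and K₃ := 4‖θ₀‖₁², one has hᵀ J h ≤ K₂ γ + K₃ ε, where ε := max_{i,j} |(V(θ₀) − J)_{ij}|. -/
open Finset

lemma g_pos (x : ℝ) : 0 < g x := by
  unfold g
  split_ifs with h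
  · norm_num
  · rcases lt_or_gt_of_ne h with hx | hx
    · apply div_pos_of_neg_of_neg _ hx
      have : Real.exp (2 * x) < 1 := by
        rw [← Real.exp_zero]; exact Real.exp_lt_exp.mpr (by linarith)
      linarith
    · apply div_pos _ hx
      have : 1 < Real.exp (2 * x) := by
        rw [← Real.exp_zero]; exact Real.exp_lt_exp.mpr (by linarith)
      linarith

lemma gmul (a : ℝ) : a * (Real.exp (2 * a) - 1) = a ^ 2 * g a := by
  unfold g
  split_ifs with h
  · subst h; ring_nf
  · field_simp

-- auxiliary lemmas (to be placed above the theorem)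

lemma sum3_comm {p n : ℕ} (f : Fin p → Fin p → Fin n → ℝ) :
    ∑ i, ∑ j, ∑ k, f i j k = ∑ k, ∑ i, ∑ j, f i j k := by
  calc ∑ i, ∑ j, ∑ k, f i j k = ∑ i, ∑ k, ∑ j, f i j k :=
        Finset.sum_congr rfl fun i _ => Finset.sum_comm
    _ = ∑ k, ∑ i, ∑ j, f i j k := Finset.sum_comm

/-- Key quadratic-form bound (from the proof of Theorem 3.1): with `h := θ₀ - θ̂`,
`K₂ := (8/ν)‖θ₀‖₁` and `K₃ := 4‖θ₀‖₁²`, one has `hᵀ J h ≤ K₂ γ + K₃ ε`,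
where `ε := max_{i,j} |(V(θ₀) - J)_{ij}|`. -/
theorem quadratic_form_bound
    (n p : ℕ) (hn : 0 < n) (hp : 0 < p)
    (C : ℝ) (hC : 0 < C)
    (x : Fin (n + 1) → ℝ) (z : Fin n → Fin p → ℝ)
    (hz : ∀ k i, |z k i| ≤ C)
    (θ₀ θhat : Fin p → ℝ)
    (ν : ℝ) (hν : IsLeast (g '' Set.Icc (-(2 * C * l1 θ₀)) (2 * C * l1 θ₀)) ν)
    (γ : ℝ) (hγ : 0 < γ)
    (hfeas : linf (psiD x z θhat) ≤ γ)
    (hmin : l1 θhat ≤ l1 θ₀)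
    (htrue : linf (psiD x z θ₀) ≤ γ) :
    quadForm (JD z) (θ₀ - θhat) ≤
      8 / ν * l1 θ₀ * γ + 4 * l1 θ₀ ^ 2 * epsD x z θ₀ := by
  have hn' : (n : ℝ) ≠ 0 := Nat.cast_ne_zero.mpr hn.ne'
  have hnn : (n : ℝ) * (1 / n) = 1 := by field_simp
  -- abbreviations
  set h : Fin p → ℝ := θ₀ - θhat with hhdef
  have hfun : ∀ i, h i = θ₀ i - θhat i := fun i => rfl
  set E : Fin n → ℝ :=
    fun k => Real.exp (-2 * ∑ l, θ₀ l * z k l) * (x k.succ - x k.castSucc) ^ 2 with hEdef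
  set a : Fin n → ℝ := fun k => ∑ j, h j * z k j with hadef
  have hE : ∀ k, 0 ≤ E k := fun k => mul_nonneg (Real.exp_pos _).le (sq_nonneg _)
  have hl1θ : 0 ≤ l1 θ₀ := Finset.sum_nonneg fun i _ => abs_nonneg _
  have hl1h : 0 ≤ l1 h := Finset.sum_nonneg fun i _ => abs_nonneg _
  have hl1 : l1 h ≤ 2 * l1 θ₀ := by
    have : l1 h ≤ l1 θ₀ + l1 θhat := by
      unfold l1
      rw [← Finset.sum_add_distrib]
      exact Finset.sum_le_sum fun i _ => by rw [hfun]; exact abs_sub _ _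
    linarith
  have hν0 : 0 < ν := by
    obtain ⟨y, _, hy⟩ := hν.1
    exact hy ▸ g_pos y
  -- |a k| small
  have hak : ∀ k, |a k| ≤ 2 * C * l1 θ₀ := by
    intro k
    calc |a k| ≤ ∑ j, |h j * z k j| := Finset.abs_sum_le_sum_abs _ _
      _ ≤ ∑ j, |h j| * C := Finset.sum_le_sum fun j _ => by
          rw [abs_mul]; exact mul_le_mul_of_nonneg_left (hz k j) (abs_nonneg _)
      _ = l1 h * C := by rw [← Finset.sum_mul]; rfl
      _ ≤ 2 * C * l1 θ₀ := by nlinarith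
  have hg : ∀ k, ν ≤ g (a k) := fun k =>
    hν.2 ⟨a k, Set.mem_Icc.mpr (abs_le.mp (hak k)), rfl⟩
  -- relation between inner products
  have hip : ∀ k, (∑ j, θhat j * z k j) = (∑ l, θ₀ l * z k l) - a k := by
    intro k
    rw [hadef, ← Finset.sum_sub_distrib]
    exact Finset.sum_congr rfl fun j _ => by rw [hfun]; ring
  -- identity 1
  have id1 : ∑ i, h i * (psiD x z θhat i - psiD x z θ₀ i)
      = ∑ k, a k * (E k * (Real.exp (2 * a k) - 1)) := by
    have step : ∀ i, psiD x z θhat i - psiD x z θ₀ i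
        = ∑ k, z k i * (E k * (Real.exp (2 * a k) - 1)) := by
      intro i
      simp only [psiD, hnn, div_one, one_mul]
      rw [← Finset.sum_sub_distrib]
      refine Finset.sum_congr rfl fun k _ => ?_
      rw [hip k, show -2 * ((∑ l, θ₀ l * z k l) - a k)
        = -2 * (∑ l, θ₀ l * z k l) + 2 * a k by ring, Real.exp_add, hEdef]
      ring
    calc ∑ i, h i * (psiD x z θhat i - psiD x z θ₀ i)
        = ∑ i, ∑ k, h i * (z k i * (E k * (Real.exp (2 * a k) - 1))) := by
          refine Finset.sum_congr rfl fun i _ => ?_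
          rw [step i, Finset.mul_sum]
      _ = ∑ k, ∑ i, h i * (z k i * (E k * (Real.exp (2 * a k) - 1))) :=
          Finset.sum_comm
      _ = ∑ k, a k * (E k * (Real.exp (2 * a k) - 1)) := by
          refine Finset.sum_congr rfl fun k _ => ?_
          rw [hadef, Finset.sum_mul]
          exact Finset.sum_congr rfl fun i _ => by ring
  -- identity 2
  have id2 : quadForm (VD x z θ₀) h = ∑ k, 2 * (E k * a k ^ 2) := by
    simp only [quadForm, VD, hnn, div_one]
    calc ∑ i, ∑ j, h i * (2 * ∑ k, Real.exp (-2 * ∑ l, θ₀ l * z k l) *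
            (x k.succ - x k.castSucc) ^ 2 * z k i * z k j) * h j
        = ∑ i, ∑ j, ∑ k, h i * (2 * (E k * z k i * z k j)) * h j := by
          refine Finset.sum_congr rfl fun i _ => Finset.sum_congr rfl fun j _ => ?_
          rw [Finset.mul_sum, Finset.mul_sum, Finset.sum_mul]
      _ = ∑ k, ∑ i, ∑ j, h i * (2 * (E k * z k i * z k j)) * h j := sum3_comm _
      _ = ∑ k, 2 * (E k * a k ^ 2) := by
          refine Finset.sum_congr rfl fun k _ => ?_
          rw [hadef, pow_two, Finset.sum_mul_sum]
          simp only [Finset.mul_sum]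
          refine Finset.sum_congr rfl fun i _ => ?_
          exact Finset.sum_congr rfl fun j _ => by ring
  -- pointwise lower bound via g
  have key : ∀ k, ν * (E k * a k ^ 2) ≤ a k * (E k * (Real.exp (2 * a k) - 1)) := by
    intro k
    have h1 : a k * (E k * (Real.exp (2 * a k) - 1))
        = E k * (a k * (Real.exp (2 * a k) - 1)) := by ring
    rw [h1, gmul]
    calc ν * (E k * a k ^ 2) ≤ g (a k) * (E k * a k ^ 2) :=
          mul_le_mul_of_nonneg_right (hg k) (mul_nonneg (hE k) (sq_nonneg _))
      _ = E k * (a k ^ 2 * g (a k)) := by ring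
  -- componentwise ψ bounds
  have hψ : ∀ (θ' : Fin p → ℝ), linf (psiD x z θ') ≤ γ → ∀ i, |psiD x z θ' i| ≤ γ := by
    intro θ' hb i
    exact le_trans (le_ciSup (Finite.bddAbove_range fun i => |psiD x z θ' i|) i) hb
  have hsum : ∑ i, h i * (psiD x z θhat i - psiD x z θ₀ i) ≤ 2 * γ * l1 h := by
    calc ∑ i, h i * (psiD x z θhat i - psiD x z θ₀ i)
        ≤ ∑ i, |h i| * (2 * γ) := by
          refine Finset.sum_le_sum fun i _ => ?_
          calc h i * (psiD x z θhat i - psiD x z θ₀ i)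
              ≤ |h i * (psiD x z θhat i - psiD x z θ₀ i)| := le_abs_self _
            _ = |h i| * |psiD x z θhat i - psiD x z θ₀ i| := abs_mul _ _
            _ ≤ |h i| * (2 * γ) := by
                refine mul_le_mul_of_nonneg_left ?_ (abs_nonneg _)
                calc |psiD x z θhat i - psiD x z θ₀ i|
                    ≤ |psiD x z θhat i| + |psiD x z θ₀ i| := abs_sub _ _
                  _ ≤ 2 * γ := by
                      have := hψ θhat hfeas i; have := hψ θ₀ htrue i; linarith
      _ = 2 * γ * l1 h := by rw [← Finset.sum_mul]; unfold l1; ring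
  -- bound on quadForm V
  have hqV : ν * quadForm (VD x z θ₀) h ≤ 8 * γ * l1 θ₀ := by
    calc ν * quadForm (VD x z θ₀) h = ∑ k, ν * (2 * (E k * a k ^ 2)) := by
          rw [id2, Finset.mul_sum]
      _ ≤ ∑ k, 2 * (a k * (E k * (Real.exp (2 * a k) - 1))) := by
          refine Finset.sum_le_sum fun k _ => ?_
          have := key k; nlinarith
      _ = 2 * ∑ i, h i * (psiD x z θhat i - psiD x z θ₀ i) := by
          rw [id1, Finset.mul_sum]
      _ ≤ 2 * (2 * γ * l1 h) := by linarith
      _ ≤ 8 * γ * l1 θ₀ := by nlinarith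
  have hqV' : quadForm (VD x z θ₀) h ≤ 8 / ν * l1 θ₀ * γ := by
    rw [show (8 : ℝ) / ν * l1 θ₀ * γ = 8 * γ * l1 θ₀ / ν by ring, le_div_iff₀ hν0]
    linarith [hqV]
  -- epsilon bounds
  have heps : ∀ i j, |VD x z θ₀ i j - JD z i j| ≤ epsD x z θ₀ := by
    intro i j
    have h1 : |VD x z θ₀ i j - JD z i j| ≤ ⨆ j', |VD x z θ₀ i j' - JD z i j'| :=
      le_ciSup (Finite.bddAbove_range fun j' => |VD x z θ₀ i j' - JD z i j'|) j
    exact h1.trans (le_ciSup (Finite.bddAbove_range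
      fun i' => ⨆ j', |VD x z θ₀ i' j' - JD z i' j'|) i)
  have hεnn : 0 ≤ epsD x z θ₀ :=
    le_trans (abs_nonneg _) (heps ⟨0, hp⟩ ⟨0, hp⟩)
  -- difference of quadratic forms
  have id3 : quadForm (JD z) h - quadForm (VD x z θ₀) h
      = ∑ i, ∑ j, h i * (JD z i j - VD x z θ₀ i j) * h j := by
    simp only [quadForm]
    rw [← Finset.sum_sub_distrib]
    refine Finset.sum_congr rfl fun i _ => ?_
    rw [← Finset.sum_sub_distrib]
    exact Finset.sum_congr rfl fun j _ => by ring
  have hdiff : quadForm (JD z) h - quadForm (VD x z θ₀) h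
      ≤ epsD x z θ₀ * (l1 h * l1 h) := by
    rw [id3]
    calc ∑ i, ∑ j, h i * (JD z i j - VD x z θ₀ i j) * h j
        ≤ ∑ i, ∑ j, |h i| * epsD x z θ₀ * |h j| := by
          refine Finset.sum_le_sum fun i _ => Finset.sum_le_sum fun j _ => ?_
          calc h i * (JD z i j - VD x z θ₀ i j) * h j
              ≤ |h i * (JD z i j - VD x z θ₀ i j) * h j| := le_abs_self _
            _ = |h i| * |JD z i j - VD x z θ₀ i j| * |h j| := by
                rw [abs_mul, abs_mul]
            _ ≤ |h i| * epsD x z θ₀ * |h j| := by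
                gcongr
                rw [abs_sub_comm]; exact heps i j
      _ = epsD x z θ₀ * (l1 h * l1 h) := by
          unfold l1
          rw [Finset.sum_mul_sum, Finset.mul_sum]
          refine Finset.sum_congr rfl fun i _ => ?_
          rw [Finset.mul_sum]
          exact Finset.sum_congr rfl fun j _ => by ring
  have hfinal : epsD x z θ₀ * (l1 h * l1 h) ≤ 4 * l1 θ₀ ^ 2 * epsD x z θ₀ := by
    have h4 : (0:ℝ) ≤ 2 * l1 θ₀ := by linarith
    have h5 : l1 h * l1 h ≤ (2 * l1 θ₀) * (2 * l1 θ₀) := mul_le_mul hl1 hl1 hl1h h4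
    calc epsD x z θ₀ * (l1 h * l1 h)
        ≤ epsD x z θ₀ * ((2 * l1 θ₀) * (2 * l1 θ₀)) :=
          mul_le_mul_of_nonneg_left h5 hεnn
      _ = 4 * l1 θ₀ ^ 2 * epsD x z θ₀ := by ring
  linarith
end

section
/- (Theorem 3.2(i), deterministic core.) Under the Dantzig-selector hypotheses, with h := θ₀ − θ̂, S := |T₀|, K₄ := 4/ν and ε := max_{i,j} |(V(θ₀) − J)_{ij}|: if κ(T₀; J)² > 4 S ε, then ‖θ̂ − θ₀‖₁ ≤ 4 K₄ S γ / (κ(T₀; J)² − 4 S ε). -/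
open Finset

lemma g_mul (u : ℝ) : u * (1 - Real.exp (2 * -u)) = u ^ 2 * g (-u) := by
  rcases eq_or_ne u 0 with rfl | h
  · simp
  · unfold g
    rw [if_neg (neg_ne_zero.mpr h), div_neg, ← neg_div, neg_sub]
    field_simp

lemma triple_comm {M : Type*} [AddCommMonoid M] {a b c : ℕ} (f : Fin a → Fin b → Fin c → M) :
    ∑ i, ∑ j, ∑ k, f i j k = ∑ k, ∑ i, ∑ j, f i j k := by
  have h1 : ∀ i : Fin a, ∑ j, ∑ k, f i j k = ∑ k, ∑ j, f i j k := fun i => Finset.sum_comm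
  simp_rw [h1]
  exact Finset.sum_comm

lemma quad_sum {n q : ℕ} (w : Fin n → ℝ) (z : Fin n → Fin q → ℝ) (h : Fin q → ℝ) :
    ∑ i, ∑ j, h i * (∑ k, w k * z k i * z k j) * h j
      = ∑ k, w k * (∑ i, h i * z k i) ^ 2 := by
  have key : ∀ k, w k * (∑ i, h i * z k i) ^ 2
      = ∑ i, ∑ j, h i * (w k * z k i * z k j) * h j := by
    intro k
    rw [sq, Finset.sum_mul_sum, Finset.mul_sum]
    refine Finset.sum_congr rfl fun i _ => ?_
    rw [Finset.mul_sum]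
    exact Finset.sum_congr rfl fun j _ => by ring
  simp_rw [key, ← triple_comm fun i j k => h i * (w k * z k i * z k j) * h j]
  refine Finset.sum_congr rfl fun i _ => Finset.sum_congr rfl fun j _ => ?_
  rw [Finset.mul_sum, Finset.sum_mul]

/-- Theorem 3.2(i), deterministic core: with `S := |T₀|`, `K₄ := 4/ν` and
`ε := max_{i,j} |(V(θ₀) - J)_{ij}|`: if `κ(T₀;J)² > 4Sε` then
`‖θ̂ - θ₀‖₁ ≤ 4K₄Sγ/(κ(T₀;J)² - 4Sε)`. -/
theorem theorem_3_2_i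
    (n p : ℕ) (hn : 0 < n) (hp : 0 < p)
    (C : ℝ) (hC : 0 < C)
    (x : Fin (n + 1) → ℝ) (z : Fin n → Fin p → ℝ)
    (hz : ∀ k i, |z k i| ≤ C)
    (θ₀ θhat : Fin p → ℝ)
    (ν : ℝ) (hν : IsLeast (g '' Set.Icc (-(2 * C * l1 θ₀)) (2 * C * l1 θ₀)) ν)
    (γ : ℝ) (hγ : 0 < γ)
    (hfeas : linf (psiD x z θhat) ≤ γ)
    (hmin : l1 θhat ≤ l1 θ₀)
    (htrue : linf (psiD x z θ₀) ≤ γ)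
    (hθ₀ : θ₀ ≠ 0)
    (hκ : 4 * ((Finset.univ.filter fun j => θ₀ j ≠ 0).card : ℝ) * epsD x z θ₀ <
      kappa (Finset.univ.filter fun j => θ₀ j ≠ 0) (JD z) ^ 2) :
    l1 (θhat - θ₀) ≤
      4 * (4 / ν) * ((Finset.univ.filter fun j => θ₀ j ≠ 0).card : ℝ) * γ /
        (kappa (Finset.univ.filter fun j => θ₀ j ≠ 0) (JD z) ^ 2 -
          4 * ((Finset.univ.filter fun j => θ₀ j ≠ 0).card : ℝ) * epsD x z θ₀) := by
  classical
  set T₀ : Finset (Fin p) := Finset.univ.filter fun j => θ₀ j ≠ 0 with hT₀def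
  set S : ℝ := (T₀.card : ℝ) with hSdef
  set κ : ℝ := kappa T₀ (JD z) with hκdef
  set ε : ℝ := epsD x z θ₀ with hεdef
  set h : Fin p → ℝ := θhat - θ₀ with hhdef
  have hnp : Nonempty (Fin p) := ⟨⟨0, hp⟩⟩
  have hn' : ((n : ℝ) * (1 / n)) = 1 := by
    field_simp
  -- ν > 0
  obtain ⟨x₀, _, hgx₀⟩ := hν.1
  have hν0 : 0 < ν := hgx₀ ▸ g_pos x₀
  have Snn : (0:ℝ) ≤ S := Nat.cast_nonneg _
  -- ε ≥ 0 and entrywise bound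
  have hεij : ∀ i j, |VD x z θ₀ i j - JD z i j| ≤ ε := by
    intro i j
    rw [hεdef]
    unfold epsD
    calc |VD x z θ₀ i j - JD z i j|
        ≤ ⨆ j', |VD x z θ₀ i j' - JD z i j'| :=
          le_ciSup (f := fun j' => |VD x z θ₀ i j' - JD z i j'|)
            (Set.finite_range _).bddAbove j
      _ ≤ ⨆ i', ⨆ j', |VD x z θ₀ i' j' - JD z i' j'| :=
          le_ciSup (f := fun i' => ⨆ j', |VD x z θ₀ i' j' - JD z i' j'|)
            (Set.finite_range _).bddAbove i
  have hεnn : (0:ℝ) ≤ ε := le_trans (abs_nonneg _) (hεij ⟨0, hp⟩ ⟨0, hp⟩)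
  have hden : 0 < κ ^ 2 - 4 * S * ε := sub_pos.mpr hκ
  have hl1nn : ∀ v : Fin p → ℝ, 0 ≤ l1 v :=
    fun v => Finset.sum_nonneg fun i _ => abs_nonneg _
  have hl1onnn : ∀ (T : Finset (Fin p)) (v : Fin p → ℝ), 0 ≤ l1on T v :=
    fun T v => Finset.sum_nonneg fun i _ => abs_nonneg _
  -- trivial case
  by_cases hne : θhat = θ₀
  · have : l1 (θhat - θ₀) = 0 := by simp [hne, l1]
    rw [this]
    apply div_nonneg _ hden.le
    have h1 : (0:ℝ) ≤ 4 / ν := div_nonneg (by norm_num) hν0.le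
    have := mul_nonneg (mul_nonneg (mul_nonneg (by norm_num : (0:ℝ) ≤ 4) h1) Snn) hγ.le
    linarith
  · have hhne : h ≠ 0 := sub_ne_zero.mpr hne
    have hl1pos : 0 < l1 h := by
      rcases lt_or_eq_of_le (hl1nn h) with hlt | heq
      · exact hlt
      · exfalso
        apply hhne
        funext i
        have := (Finset.sum_eq_zero_iff_of_nonneg (fun i _ => abs_nonneg (h i))).mp
          heq.symm i (Finset.mem_univ i)
        exact abs_eq_zero.mp this
    -- split of l1
    have hsplit : ∀ v : Fin p → ℝ, l1 v = l1on T₀ v + l1on T₀ᶜ v :=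
      fun v => (Finset.sum_add_sum_compl T₀ _).symm
    have hzero : ∀ i ∈ T₀ᶜ, θ₀ i = 0 := by
      intro i hi
      have := Finset.mem_compl.mp hi
      simpa [hT₀def] using this
    -- Step 1: cone membership
    have hconeineq : l1on T₀ᶜ h ≤ l1on T₀ h := by
      have h1 : l1on T₀ᶜ θhat = l1on T₀ᶜ h := by
        refine Finset.sum_congr rfl fun i hi => ?_
        rw [hhdef, Pi.sub_apply, hzero i hi, sub_zero]
      have h2 : l1on T₀ θ₀ - l1on T₀ h ≤ l1on T₀ θhat := by
        rw [l1on, l1on, l1on, ← Finset.sum_sub_distrib]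
        refine Finset.sum_le_sum fun i _ => ?_
        have : θhat i = θ₀ i - (-(h i)) := by rw [hhdef, Pi.sub_apply]; ring
        rw [this]
        calc |θ₀ i| - |h i| = |θ₀ i| - |(-(h i))| := by rw [abs_neg]
          _ ≤ |θ₀ i - (-(h i))| := abs_sub_abs_le_abs_sub _ _
      have h3 : l1on T₀ θ₀ = l1 θ₀ := by
        rw [hsplit θ₀]
        have : l1on T₀ᶜ θ₀ = 0 :=
          Finset.sum_eq_zero fun i hi => by rw [hzero i hi, abs_zero]
        rw [this, add_zero]
      have h4 := hsplit θhat
      linarith [hmin]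
    have h2l1 : l1 h ≤ 2 * l1 θ₀ := by
      have : l1 h ≤ l1 θhat + l1 θ₀ := by
        rw [l1, l1, l1, ← Finset.sum_add_distrib]
        refine Finset.sum_le_sum fun i _ => ?_
        rw [hhdef, Pi.sub_apply, sub_eq_add_neg]
        exact (abs_add_le _ _).trans (by rw [abs_neg])
      linarith [hmin]
    have hl1le : l1 h ≤ 2 * l1on T₀ h := by linarith [hsplit h, hconeineq]
    have hT₀l1pos : 0 < l1on T₀ h := by linarith
    -- linf bounds
    have hlinfle : ∀ (v : Fin p → ℝ) (i : Fin p), |v i| ≤ linf v := by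
      intro v i
      unfold linf
      exact le_ciSup (f := fun i' => |v i'|) (Set.finite_range _).bddAbove i
    -- psi difference
    have hpsidiff : ∀ i, psiD x z θ₀ i - psiD x z θhat i
        = ∑ k, z k i * ((Real.exp (-2 * ∑ j, θ₀ j * z k j)
            - Real.exp (-2 * ∑ j, θhat j * z k j)) * (x k.succ - x k.castSucc) ^ 2) := by
      intro i
      unfold psiD
      rw [hn']
      simp only [one_div_one, one_mul]
      rw [← Finset.sum_sub_distrib]
      exact Finset.sum_congr rfl fun k _ => by ring
    have hsum1 : ∑ i, h i * (psiD x z θ₀ i - psiD x z θhat i)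
        = ∑ k, (∑ j, h j * z k j) * ((Real.exp (-2 * ∑ j, θ₀ j * z k j)
            - Real.exp (-2 * ∑ j, θhat j * z k j)) * (x k.succ - x k.castSucc) ^ 2) := by
      simp_rw [hpsidiff, Finset.mul_sum]
      rw [Finset.sum_comm]
      refine Finset.sum_congr rfl fun k _ => ?_
      rw [Finset.sum_mul]
      exact Finset.sum_congr rfl fun i _ => by ring
    -- per-k lower bound
    have hk : ∀ k : Fin n,
        ν * (Real.exp (-2 * ∑ j, θ₀ j * z k j) * (x k.succ - x k.castSucc) ^ 2
            * (∑ j, h j * z k j) ^ 2)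
        ≤ (∑ j, h j * z k j) * ((Real.exp (-2 * ∑ j, θ₀ j * z k j)
            - Real.exp (-2 * ∑ j, θhat j * z k j)) * (x k.succ - x k.castSucc) ^ 2) := by
      intro k
      have hbval : (∑ j, θhat j * z k j) = (∑ j, θ₀ j * z k j) + (∑ j, h j * z k j) := by
        rw [← Finset.sum_add_distrib]
        refine Finset.sum_congr rfl fun j _ => ?_
        rw [hhdef, Pi.sub_apply]; ring
      have hu : |∑ j, h j * z k j| ≤ 2 * C * l1 θ₀ := by
        calc |∑ j, h j * z k j| ≤ ∑ j, |h j * z k j| := Finset.abs_sum_le_sum_abs _ _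
          _ ≤ ∑ j, |h j| * C := Finset.sum_le_sum fun j _ => by
              rw [abs_mul]
              exact mul_le_mul_of_nonneg_left (hz k j) (abs_nonneg _)
          _ = l1 h * C := by rw [l1, Finset.sum_mul]
          _ ≤ (2 * l1 θ₀) * C := mul_le_mul_of_nonneg_right h2l1 hC.le
          _ = 2 * C * l1 θ₀ := by ring
      have hgk : ν ≤ g (-(∑ j, h j * z k j)) := by
        apply hν.2
        refine ⟨-(∑ j, h j * z k j), ?_, rfl⟩
        rcases abs_le.mp hu with ⟨hu1, hu2⟩
        exact Set.mem_Icc.mpr ⟨by linarith, by linarith⟩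
      have hid : (∑ j, h j * z k j) * ((Real.exp (-2 * ∑ j, θ₀ j * z k j)
            - Real.exp (-2 * ∑ j, θhat j * z k j)) * (x k.succ - x k.castSucc) ^ 2)
          = (Real.exp (-2 * ∑ j, θ₀ j * z k j) * (x k.succ - x k.castSucc) ^ 2)
            * ((∑ j, h j * z k j) * (1 - Real.exp (2 * -(∑ j, h j * z k j)))) := by
        rw [hbval, show -2 * ((∑ j, θ₀ j * z k j) + (∑ j, h j * z k j))
            = (-2 * ∑ j, θ₀ j * z k j) + (2 * -(∑ j, h j * z k j)) by ring, Real.exp_add]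
        ring
      rw [hid, g_mul]
      have h0 : 0 ≤ Real.exp (-2 * ∑ j, θ₀ j * z k j) * (x k.succ - x k.castSucc) ^ 2
          * (∑ j, h j * z k j) ^ 2 := by positivity
      calc ν * (Real.exp (-2 * ∑ j, θ₀ j * z k j) * (x k.succ - x k.castSucc) ^ 2
            * (∑ j, h j * z k j) ^ 2)
          ≤ g (-(∑ j, h j * z k j)) * (Real.exp (-2 * ∑ j, θ₀ j * z k j)
            * (x k.succ - x k.castSucc) ^ 2 * (∑ j, h j * z k j) ^ 2) :=
            mul_le_mul_of_nonneg_right hgk h0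
        _ = (Real.exp (-2 * ∑ j, θ₀ j * z k j) * (x k.succ - x k.castSucc) ^ 2)
            * ((∑ j, h j * z k j) ^ 2 * g (-(∑ j, h j * z k j))) := by ring
    -- upper bound
    have hup : ∑ i, h i * (psiD x z θ₀ i - psiD x z θhat i) ≤ 2 * γ * l1 h := by
      calc ∑ i, h i * (psiD x z θ₀ i - psiD x z θhat i)
          ≤ ∑ i, |h i * (psiD x z θ₀ i - psiD x z θhat i)| :=
            Finset.sum_le_sum fun i _ => le_abs_self _
        _ ≤ ∑ i, |h i| * (2 * γ) := by
            refine Finset.sum_le_sum fun i _ => ?_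
            rw [abs_mul]
            refine mul_le_mul_of_nonneg_left ?_ (abs_nonneg _)
            have ht1 := hlinfle (psiD x z θ₀) i
            have ht2 := hlinfle (psiD x z θhat) i
            have : |psiD x z θ₀ i - psiD x z θhat i|
                ≤ |psiD x z θ₀ i| + |psiD x z θhat i| := by
              rw [sub_eq_add_neg]
              exact (abs_add_le _ _).trans (by rw [abs_neg])
            linarith
        _ = 2 * γ * l1 h := by rw [l1, ← Finset.sum_mul]; ring
    have hlow2 : ν * ∑ k, Real.exp (-2 * ∑ j, θ₀ j * z k j)
        * (x k.succ - x k.castSucc) ^ 2 * (∑ j, h j * z k j) ^ 2 ≤ 2 * γ * l1 h := by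
      rw [Finset.mul_sum]
      calc ∑ k, ν * (Real.exp (-2 * ∑ j, θ₀ j * z k j)
            * (x k.succ - x k.castSucc) ^ 2 * (∑ j, h j * z k j) ^ 2)
          ≤ ∑ k, (∑ j, h j * z k j) * ((Real.exp (-2 * ∑ j, θ₀ j * z k j)
            - Real.exp (-2 * ∑ j, θhat j * z k j)) * (x k.succ - x k.castSucc) ^ 2) :=
            Finset.sum_le_sum fun k _ => hk k
        _ = ∑ i, h i * (psiD x z θ₀ i - psiD x z θhat i) := hsum1.symm
        _ ≤ 2 * γ * l1 h := hup
    -- quadForm of V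
    have hVreshape : ∀ i j, VD x z θ₀ i j = ∑ k, (2 * (Real.exp (-2 * ∑ l, θ₀ l * z k l)
        * (x k.succ - x k.castSucc) ^ 2)) * z k i * z k j := by
      intro i j
      unfold VD
      rw [hn', div_one, Finset.mul_sum]
      exact Finset.sum_congr rfl fun k _ => by ring
    have hVq : quadForm (VD x z θ₀) h = ∑ k, (2 * (Real.exp (-2 * ∑ l, θ₀ l * z k l)
        * (x k.succ - x k.castSucc) ^ 2)) * (∑ i, h i * z k i) ^ 2 := by
      unfold quadForm
      simp_rw [hVreshape]
      exact quad_sum _ _ _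
    have hVq2 : quadForm (VD x z θ₀) h = 2 * ∑ k, Real.exp (-2 * ∑ j, θ₀ j * z k j)
        * (x k.succ - x k.castSucc) ^ 2 * (∑ j, h j * z k j) ^ 2 := by
      rw [hVq, Finset.mul_sum]
      exact Finset.sum_congr rfl fun k _ => by ring
    have hVbound : ν * quadForm (VD x z θ₀) h ≤ 4 * γ * l1 h := by
      rw [hVq2]
      linarith only [hlow2]
    -- quadForm of J
    have hJreshape : ∀ i j, JD z i j = ∑ k, (fun _ : Fin n => 2 / (n:ℝ)) k * z k i * z k j := by
      intro i j
      rw [JD, Finset.mul_sum]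
      exact Finset.sum_congr rfl fun k _ => by ring
    have hJq : ∀ v : Fin p → ℝ, quadForm (JD z) v
        = ∑ k, (2 / (n:ℝ)) * (∑ i, v i * z k i) ^ 2 := by
      intro v
      unfold quadForm
      simp_rw [hJreshape]
      exact quad_sum _ _ _
    have hQnn : ∀ v : Fin p → ℝ, 0 ≤ quadForm (JD z) v := by
      intro v
      rw [hJq v]
      apply Finset.sum_nonneg
      intro k _
      positivity
    -- Step 3: J vs V
    have hJV : quadForm (JD z) h ≤ quadForm (VD x z θ₀) h + ε * l1 h ^ 2 := by
      have key : quadForm (JD z) h - quadForm (VD x z θ₀) h ≤ ε * l1 h ^ 2 := by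
        unfold quadForm
        rw [← Finset.sum_sub_distrib]
        calc ∑ i, ((∑ j, h i * JD z i j * h j) - ∑ j, h i * VD x z θ₀ i j * h j)
            = ∑ i, ∑ j, (h i * JD z i j * h j - h i * VD x z θ₀ i j * h j) :=
              Finset.sum_congr rfl fun i _ => (Finset.sum_sub_distrib _ _).symm
          _ ≤ ∑ i, ∑ j, |h i| * |h j| * ε := by
              refine Finset.sum_le_sum fun i _ => Finset.sum_le_sum fun j _ => ?_
              calc h i * JD z i j * h j - h i * VD x z θ₀ i j * h j
                  = (h i * h j) * (JD z i j - VD x z θ₀ i j) := by ring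
                _ ≤ |(h i * h j) * (JD z i j - VD x z θ₀ i j)| := le_abs_self _
                _ = |h i| * |h j| * |VD x z θ₀ i j - JD z i j| := by
                    rw [abs_mul, abs_mul, abs_sub_comm]
                _ ≤ |h i| * |h j| * ε :=
                    mul_le_mul_of_nonneg_left (hεij i j) (by positivity)
          _ = (l1 h * l1 h) * ε := by
              rw [l1, Finset.sum_mul_sum, Finset.sum_mul]
              exact Finset.sum_congr rfl fun i _ => (Finset.sum_mul _ _ _).symm
          _ = ε * l1 h ^ 2 := by ring
      linarith
    -- Step 4: compatibility
    have hbdd : BddBelow {r | ∃ h' : Fin p → ℝ, h' ≠ 0 ∧ h' ∈ cone T₀ ∧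
        r = Real.sqrt T₀.card * Real.sqrt (quadForm (JD z) h') / l1on T₀ h'} := by
      refine ⟨0, fun r hr => ?_⟩
      obtain ⟨h', _, _, rfl⟩ := hr
      exact div_nonneg (mul_nonneg (Real.sqrt_nonneg _) (Real.sqrt_nonneg _)) (hl1onnn _ _)
    have hmem : Real.sqrt T₀.card * Real.sqrt (quadForm (JD z) h) / l1on T₀ h
        ∈ {r | ∃ h' : Fin p → ℝ, h' ≠ 0 ∧ h' ∈ cone T₀ ∧
          r = Real.sqrt T₀.card * Real.sqrt (quadForm (JD z) h') / l1on T₀ h'} :=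
      ⟨h, hhne, hconeineq, rfl⟩
    have hκle : κ ≤ Real.sqrt T₀.card * Real.sqrt (quadForm (JD z) h) / l1on T₀ h :=
      csInf_le hbdd hmem
    have hκnn : 0 ≤ κ := le_csInf ⟨_, hmem⟩ fun r hr => by
      obtain ⟨h', _, _, rfl⟩ := hr
      exact div_nonneg (mul_nonneg (Real.sqrt_nonneg _) (Real.sqrt_nonneg _)) (hl1onnn _ _)
    have hκsqpos : 0 < κ ^ 2 :=
      lt_of_le_of_lt (mul_nonneg (mul_nonneg (by norm_num) Snn) hεnn) hκ
    have hκpos : 0 < κ := by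
      rcases hκnn.lt_or_eq with hlt | heq
      · exact hlt
      · exfalso
        rw [← heq] at hκsqpos
        simp at hκsqpos
    have h4 : κ * l1on T₀ h ≤ Real.sqrt S * Real.sqrt (quadForm (JD z) h) := by
      rw [hSdef]
      exact (le_div_iff₀ hT₀l1pos).mp hκle
    have h5 : κ * l1 h ≤ 2 * (Real.sqrt S * Real.sqrt (quadForm (JD z) h)) := by
      calc κ * l1 h ≤ κ * (2 * l1on T₀ h) := mul_le_mul_of_nonneg_left hl1le hκnn
        _ = 2 * (κ * l1on T₀ h) := by ring
        _ ≤ _ := by linarith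
    have h6 : κ ^ 2 * l1 h ^ 2 ≤ 4 * S * quadForm (JD z) h := by
      have hs1 : Real.sqrt S ^ 2 = S := Real.sq_sqrt Snn
      have hs2 : Real.sqrt (quadForm (JD z) h) ^ 2 = quadForm (JD z) h :=
        Real.sq_sqrt (hQnn h)
      have h5' := mul_self_le_mul_self (mul_nonneg hκnn (hl1nn h)) h5
      have hs3 : Real.sqrt S ^ 2 * Real.sqrt (quadForm (JD z) h) ^ 2
          = S * quadForm (JD z) h := by rw [hs1, hs2]
      nlinarith only [h5', hs3]
    -- Step 5: combine
    have hVle : quadForm (VD x z θ₀) h ≤ 4 / ν * γ * l1 h := by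
      have h1 : quadForm (VD x z θ₀) h ≤ 4 * γ * l1 h / ν := by
        rw [le_div_iff₀ hν0]
        linarith only [hVbound]
      calc quadForm (VD x z θ₀) h ≤ 4 * γ * l1 h / ν := h1
        _ = 4 / ν * γ * l1 h := by ring
    have hQle : quadForm (JD z) h ≤ 4 / ν * γ * l1 h + ε * l1 h ^ 2 := by linarith only [hJV, hVle]
    have chain : κ ^ 2 * l1 h ^ 2 ≤ 4 * S * (4 / ν * γ * l1 h + ε * l1 h ^ 2) :=
      h6.trans (mul_le_mul_of_nonneg_left hQle (by linarith only [Snn]))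
    have hfinal : (κ ^ 2 - 4 * S * ε) * l1 h ≤ 4 * (4 / ν) * S * γ := by
      refine le_of_mul_le_mul_right ?_ hl1pos
      nlinarith only [chain]
    rw [le_div_iff₀ hden]
    calc l1 (θhat - θ₀) * (κ ^ 2 - 4 * S * ε) = (κ ^ 2 - 4 * S * ε) * l1 h := by
          rw [hhdef]; ring
      _ ≤ 4 * (4 / ν) * S * γ := hfinal
end

section
/- (Compensator part in the proof of Lemma 4.4.) Let C > 0 be a constant. On a probability space carrying a filtration (F_t)_{t≥0} and a standard Brownian motion W with respect to (F_t), let n, p ∈ ℕ and let Z^1, …, Z^p be (F_t)-adapted real-valued processes on [0, 1] with sup_{t∈[0,1]} max_{1≤i≤p} |Z_t^i| ≤ C. Set Δ := 1/n, t_k := k/n, U_k := (W_{t_k} − W_{t_{k−1}})² − Δ, and for η > 0 let I_n^i := (1/(nΔ)) Σ_{k=1}^n Z_{t_{k−1}}^i · E[ −U_k 1_{|U_k| > η} | F_{t_{k−1}} ]. Then for every γ > 0 and η > 0, P( max_{1≤i≤p} |I_n^i| ≥ γ ) ≤ 2CΔ/(γη). -/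
open MeasureTheory ProbabilityTheory Filter

/-- `W` is a standard Brownian motion with respect to the filtration `F` (of sub-σ-algebras of
the ambient σ-algebra) under the probability measure `P`: `F` is a filtration, `W` is adapted,
`W 0 = 0`, `W` has continuous paths, and for `0 ≤ s ≤ t` the increment `W t - W s` is
independent of `F s` with distribution `N(0, t - s)`. -/
def IsStdBM {Ω : Type*} [m : MeasurableSpace Ω] (P : Measure Ω)
    (F : ℝ → MeasurableSpace Ω) (W : ℝ → Ω → ℝ) : Prop :=
  (∀ t, F t ≤ m) ∧ (∀ s t : ℝ, s ≤ t → F s ≤ F t) ∧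
  (∀ t, @Measurable Ω ℝ (F t) _ (W t)) ∧
  (∀ ω, W 0 ω = 0) ∧
  (∀ ω, Continuous fun t => W t ω) ∧
  (∀ s t : ℝ, 0 ≤ s → s ≤ t →
    Indep (MeasurableSpace.comap (fun ω => W t ω - W s ω) inferInstance) (F s) P ∧
    Measure.map (fun ω => W t ω - W s ω) P = gaussianReal 0 (t - s).toNNReal)


namespace CompAux

open Real
open scoped NNReal ENNReal

lemma integrable_even_pow {b : ℝ} (hb : 0 < b) (k : ℕ) :
    Integrable fun x : ℝ => x ^ (2 * k) * rexp (-b * x ^ 2) := by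
  have hIoi : IntegrableOn (fun x : ℝ => x ^ (2 * k) * rexp (-b * x ^ 2)) (Set.Ioi 0) := by
    have h := integrableOn_rpow_mul_exp_neg_mul_sq hb (s := ((2 * k : ℕ) : ℝ))
      (by exact lt_of_lt_of_le neg_one_lt_zero (Nat.cast_nonneg _))
    refine h.congr_fun (fun x hx => ?_) measurableSet_Ioi
    simp only [Real.rpow_natCast]
  rw [← integrableOn_univ, ← Set.Iio_union_Ici (a := (0 : ℝ)), integrableOn_union,
    integrableOn_Ici_iff_integrableOn_Ioi]
  refine ⟨?_, hIoi⟩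
  rw [← (Measure.measurePreserving_neg (volume : Measure ℝ)).integrableOn_comp_preimage
      (Homeomorph.neg ℝ).measurableEmbedding]
  simp only [Function.comp_def, Set.neg_preimage, Set.neg_Iio, neg_zero, neg_sq]
  refine hIoi.congr_fun (fun x hx => ?_) measurableSet_Ioi
  rw [Even.neg_pow (even_two_mul k)]

lemma rec_even {b : ℝ} (hb : 0 < b) (k : ℕ) :
    ∫ x : ℝ, x ^ (2 * k + 2) * rexp (-b * x ^ 2) =
      ((2 * k + 1 : ℝ) / (2 * b)) * ∫ x : ℝ, x ^ (2 * k) * rexp (-b * x ^ 2) := by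
  set f : ℝ → ℝ := fun x => x ^ (2 * k + 1) * rexp (-b * x ^ 2) with hfdef
  set f' : ℝ → ℝ := fun x =>
    (2 * k + 1 : ℝ) * (x ^ (2 * k) * rexp (-b * x ^ 2))
      - 2 * b * (x ^ (2 * k + 2) * rexp (-b * x ^ 2)) with hf'def
  have hderiv : ∀ x : ℝ, HasDerivAt f (f' x) x := by
    intro x
    have h1 : HasDerivAt (fun y : ℝ => y ^ (2 * k + 1))
        (((2 * k + 1 : ℕ) : ℝ) * x ^ (2 * k)) x := by
      simpa using hasDerivAt_pow (2 * k + 1) x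
    have h2 : HasDerivAt (fun y : ℝ => rexp (-b * y ^ 2))
        (rexp (-b * x ^ 2) * (-b * (2 * x))) x := by
      have h3 : HasDerivAt (fun y : ℝ => -b * y ^ 2) (-b * (2 * x)) x := by
        simpa using (hasDerivAt_pow 2 x).const_mul (-b)
      simpa [mul_comm] using h3.exp
    have h : HasDerivAt (fun y : ℝ => y ^ (2 * k + 1) * rexp (-b * y ^ 2)) _ x := h1.mul h2
    convert h using 1
    show (2 * k + 1 : ℝ) * (x ^ (2 * k) * rexp (-b * x ^ 2)) - 2 * b * (x ^ (2 * k + 2) * rexp (-b * x ^ 2)) = _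
    push_cast
    ring
  have hint2 : Integrable fun x : ℝ => x ^ (2 * k + 2) * rexp (-b * x ^ 2) := by
    rw [show 2 * k + 2 = 2 * (k + 1) by ring]
    exact integrable_even_pow hb (k + 1)
  have hint0 : Integrable fun x : ℝ => x ^ (2 * k) * rexp (-b * x ^ 2) :=
    integrable_even_pow hb k
  have hintf' : Integrable f' := ((hint0.const_mul _).sub (hint2.const_mul _))
  have hnorm : ∀ x : ℝ, ‖f x‖ = |x| ^ (((2 * k + 1 : ℕ) : ℝ)) * rexp (-b * x ^ 2) := by
    intro x
    rw [Real.rpow_natCast]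
    simp [hfdef, abs_mul, abs_pow, abs_of_nonneg (Real.exp_pos _).le]
  have htend0 := tendsto_rpow_abs_mul_exp_neg_mul_sq_cocompact hb ((2 * k + 1 : ℕ) : ℝ)
  have htop : Tendsto f atTop (nhds 0) := by
    rw [tendsto_zero_iff_norm_tendsto_zero]
    exact (htend0.mono_left _root_.atTop_le_cocompact).congr fun x => (hnorm x).symm
  have hbot : Tendsto f atBot (nhds 0) := by
    rw [tendsto_zero_iff_norm_tendsto_zero]
    exact (htend0.mono_left _root_.atBot_le_cocompact).congr fun x => (hnorm x).symm
  have hIoi := integral_Ioi_of_hasDerivAt_of_tendsto' (a := 0)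
    (fun x _ => hderiv x) hintf'.integrableOn htop
  have hIic := integral_Iic_of_hasDerivAt_of_tendsto' (a := 0)
    (fun x _ => hderiv x) hintf'.integrableOn hbot
  have hzero : ∫ x : ℝ, f' x = 0 := by
    rw [← intervalIntegral.integral_Iic_add_Ioi hintf'.integrableOn hintf'.integrableOn,
      hIoi, hIic]
    simp [hfdef]
  have hexp : ∫ x : ℝ, f' x =
      (2 * k + 1 : ℝ) * (∫ x : ℝ, x ^ (2 * k) * rexp (-b * x ^ 2))
        - 2 * b * ∫ x : ℝ, x ^ (2 * k + 2) * rexp (-b * x ^ 2) := by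
    rw [hf'def, integral_sub (hint0.const_mul _) (hint2.const_mul _),
      integral_const_mul, integral_const_mul]
  rw [hexp] at hzero
  have hb' : (2 : ℝ) * b ≠ 0 := by positivity
  rw [div_mul_eq_mul_div, eq_div_iff hb']
  linear_combination -hzero

lemma integral_gaussianReal_eq (v : ℝ≥0) (hv : v ≠ 0) (g : ℝ → ℝ) :
    ∫ x, g x ∂(gaussianReal 0 v) = ∫ x, gaussianPDFReal 0 v x * g x := by
  rw [gaussianReal_of_var_ne_zero _ hv]
  have hmeas : Measurable fun x => (gaussianPDFReal 0 v x).toNNReal :=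
    (measurable_gaussianPDFReal 0 v).real_toNNReal
  have hpdf : gaussianPDF 0 v = fun x => ((gaussianPDFReal 0 v x).toNNReal : ℝ≥0∞) := rfl
  rw [hpdf, integral_withDensity_eq_integral_smul hmeas g]
  congr 1
  funext x
  rw [NNReal.smul_def, smul_eq_mul, Real.coe_toNNReal _ (gaussianPDFReal_nonneg 0 v x)]

lemma pdf_arg_eq (v : ℝ≥0) (hv : v ≠ 0) (x : ℝ) :
    -(x - 0) ^ 2 / (2 * (v : ℝ)) = -(2 * (v : ℝ))⁻¹ * x ^ 2 := by
  have hV : (0 : ℝ) < (v : ℝ) := by exact_mod_cast pos_iff_ne_zero.mpr hv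
  rw [sub_zero, div_eq_mul_inv]
  ring

lemma integrable_pow_gaussianReal (v : ℝ≥0) (hv : v ≠ 0) (k : ℕ) :
    Integrable (fun x : ℝ => x ^ (2 * k)) (gaussianReal 0 v) := by
  have hV : (0 : ℝ) < (v : ℝ) := by exact_mod_cast pos_iff_ne_zero.mpr hv
  have hb : (0 : ℝ) < (2 * (v : ℝ))⁻¹ := by positivity
  rw [gaussianReal_of_var_ne_zero _ hv]
  have hmeas : Measurable fun x => (gaussianPDFReal 0 v x).toNNReal :=
    (measurable_gaussianPDFReal 0 v).real_toNNReal
  have hpdf : gaussianPDF 0 v = fun x => ((gaussianPDFReal 0 v x).toNNReal : ℝ≥0∞) := rfl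
  rw [hpdf, integrable_withDensity_iff_integrable_smul hmeas]
  have heq : (fun x : ℝ => (gaussianPDFReal 0 v x).toNNReal • x ^ (2 * k))
      = fun x : ℝ => (√(2 * π * (v : ℝ)))⁻¹
          * (x ^ (2 * k) * rexp (-(2 * (v : ℝ))⁻¹ * x ^ 2)) := by
    funext x
    rw [NNReal.smul_def, smul_eq_mul, Real.coe_toNNReal _ (gaussianPDFReal_nonneg 0 v x),
      gaussianPDFReal, pdf_arg_eq v hv x]
    ring
  rw [heq]
  exact (integrable_even_pow hb k).const_mul _

lemma integral_pow_gaussianReal (v : ℝ≥0) (hv : v ≠ 0) :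
    (∫ x : ℝ, x ^ 2 ∂(gaussianReal 0 v)) = (v : ℝ) ∧
    (∫ x : ℝ, x ^ 4 ∂(gaussianReal 0 v)) = 3 * (v : ℝ) ^ 2 := by
  have hV : (0 : ℝ) < (v : ℝ) := by exact_mod_cast pos_iff_ne_zero.mpr hv
  set b : ℝ := (2 * (v : ℝ))⁻¹ with hbdef
  have hb : (0 : ℝ) < b := by positivity
  set c : ℝ := (√(2 * π * (v : ℝ)))⁻¹ with hcdef
  have hpdfmul : ∀ (g : ℝ → ℝ) (x : ℝ),
      gaussianPDFReal 0 v x * g x = c * (g x * rexp (-b * x ^ 2)) := by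
    intro g x
    rw [gaussianPDFReal, pdf_arg_eq v hv x]
    ring
  have hJ0 : (∫ x : ℝ, x ^ (2 * 0) * rexp (-b * x ^ 2)) = √(π / b) := by
    simp only [Nat.mul_zero, pow_zero, one_mul]
    exact integral_gaussian b
  have hJ2 : (∫ x : ℝ, x ^ 2 * rexp (-b * x ^ 2))
      = (1 / (2 * b)) * ∫ x : ℝ, x ^ (2 * 0) * rexp (-b * x ^ 2) := by
    have h := rec_even hb 0
    simpa only [Nat.cast_zero, mul_zero, zero_add] using h
  have hJ4 : (∫ x : ℝ, x ^ 4 * rexp (-b * x ^ 2))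
      = (3 / (2 * b)) * ∫ x : ℝ, x ^ 2 * rexp (-b * x ^ 2) := by
    have h := rec_even hb 1
    simpa only [Nat.cast_one, mul_one, show (2 : ℕ) + 2 = 4 from rfl,
      show (2 : ℝ) + 1 = 3 by norm_num, show (2 : ℕ) * 1 = 2 from rfl] using h
  have hcJ0 : c * √(π / b) = 1 := by
    have h1 : π / b = 2 * π * (v : ℝ) := by
      rw [hbdef, div_eq_mul_inv, inv_inv]
      ring
    rw [hcdef, h1]
    exact inv_mul_cancel₀ (by positivity)
  have h2b : (1 : ℝ) / (2 * b) = (v : ℝ) := by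
    rw [hbdef, one_div, mul_inv, inv_inv]
    ring
  have hM : ∀ k : ℕ, (∫ x : ℝ, x ^ k ∂(gaussianReal 0 v))
      = c * ∫ x : ℝ, x ^ k * rexp (-b * x ^ 2) := by
    intro k
    rw [integral_gaussianReal_eq v hv]
    simp_rw [hpdfmul (fun x => x ^ k)]
    exact integral_const_mul c _
  constructor
  · rw [hM 2, hJ2, hJ0, ← mul_assoc, mul_comm c, mul_assoc, hcJ0, mul_one, h2b]
  · rw [hM 4, hJ4, hJ2, hJ0]
    have heq : c * (3 / (2 * b) * (1 / (2 * b) * √(π / b)))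
        = (3 * ((1 / (2 * b)) * (1 / (2 * b)))) * (c * √(π / b)) := by ring
    rw [heq, hcJ0, mul_one, h2b]
    ring

lemma quad_integrable (v : ℝ≥0) (hv : v ≠ 0) :
    Integrable (fun x : ℝ => (x ^ 2 - (v : ℝ)) ^ 2) (gaussianReal 0 v) := by
  have h4 := integrable_pow_gaussianReal v hv 2
  have h2 := integrable_pow_gaussianReal v hv 1
  rw [show 2 * 2 = 4 from rfl] at h4
  rw [show 2 * 1 = 2 from rfl] at h2
  have heq : (fun x : ℝ => (x ^ 2 - (v : ℝ)) ^ 2)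
      = fun x : ℝ => (x ^ 4 - 2 * (v : ℝ) * x ^ 2) + (v : ℝ) ^ 2 := by
    funext x; ring
  rw [heq]
  exact (h4.sub (h2.const_mul _)).add (integrable_const _)

lemma quad_integral (v : ℝ≥0) (hv : v ≠ 0) :
    (∫ x : ℝ, (x ^ 2 - (v : ℝ)) ^ 2 ∂(gaussianReal 0 v)) = 2 * (v : ℝ) ^ 2 := by
  have h4 := integrable_pow_gaussianReal v hv 2
  have h2 := integrable_pow_gaussianReal v hv 1
  rw [show 2 * 2 = 4 from rfl] at h4
  rw [show 2 * 1 = 2 from rfl] at h2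
  have heq : (fun x : ℝ => (x ^ 2 - (v : ℝ)) ^ 2)
      = fun x : ℝ => (x ^ 4 - 2 * (v : ℝ) * x ^ 2) + (v : ℝ) ^ 2 := by
    funext x; ring
  have hsub : Integrable (fun x : ℝ => x ^ 4 - 2 * (v : ℝ) * x ^ 2) (gaussianReal 0 v) :=
    h4.sub (h2.const_mul _)
  rw [heq, integral_add hsub (integrable_const _),
    integral_sub h4 (h2.const_mul _), integral_const_mul, integral_const,
    (integral_pow_gaussianReal v hv).1, (integral_pow_gaussianReal v hv).2,
    probReal_univ]
  simp
  ring

lemma g_measurable (Δ η : ℝ) :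
    Measurable (fun x : ℝ => if η < |x ^ 2 - Δ| then -(x ^ 2 - Δ) else 0) := by
  refine Measurable.ite ?_ ((measurable_id.pow_const 2).sub_const Δ).neg measurable_const
  exact measurableSet_lt measurable_const ((measurable_id.pow_const 2).sub_const Δ).abs

lemma g_abs_le (Δ : ℝ) {η : ℝ} (hη : 0 < η) (x : ℝ) :
    |if η < |x ^ 2 - Δ| then -(x ^ 2 - Δ) else 0| ≤ (x ^ 2 - Δ) ^ 2 / η := by
  by_cases h : η < |x ^ 2 - Δ|
  · rw [if_pos h, abs_neg, le_div_iff₀ hη]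
    calc |x ^ 2 - Δ| * η ≤ |x ^ 2 - Δ| * |x ^ 2 - Δ| :=
          mul_le_mul_of_nonneg_left h.le (abs_nonneg _)
      _ = (x ^ 2 - Δ) ^ 2 := by rw [abs_mul_abs_self]; ring
  · rw [if_neg h, abs_zero]
    positivity

lemma g_integrable (v : ℝ≥0) (hv : v ≠ 0) {η : ℝ} (hη : 0 < η) :
    Integrable (fun x : ℝ => if η < |x ^ 2 - (v : ℝ)| then -(x ^ 2 - (v : ℝ)) else 0)
      (gaussianReal 0 v) := by
  refine Integrable.mono' ((quad_integrable v hv).div_const η)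
    (g_measurable _ _).aestronglyMeasurable (ae_of_all _ fun x => ?_)
  simpa [Real.norm_eq_abs] using g_abs_le (v : ℝ) hη x

lemma g_integral_bound (v : ℝ≥0) (hv : v ≠ 0) {η : ℝ} (hη : 0 < η) :
    |∫ x : ℝ, (if η < |x ^ 2 - (v : ℝ)| then -(x ^ 2 - (v : ℝ)) else 0) ∂(gaussianReal 0 v)|
      ≤ 2 * (v : ℝ) ^ 2 / η := by
  calc |∫ x : ℝ, (if η < |x ^ 2 - (v : ℝ)| then -(x ^ 2 - (v : ℝ)) else 0) ∂(gaussianReal 0 v)|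
      ≤ ∫ x : ℝ, |if η < |x ^ 2 - (v : ℝ)| then -(x ^ 2 - (v : ℝ)) else 0| ∂(gaussianReal 0 v) :=
        by simpa only [Real.norm_eq_abs] using
          norm_integral_le_integral_norm (μ := gaussianReal 0 v)
            (fun x : ℝ => if η < |x ^ 2 - (v : ℝ)| then -(x ^ 2 - (v : ℝ)) else 0)
    _ ≤ ∫ x : ℝ, (x ^ 2 - (v : ℝ)) ^ 2 / η ∂(gaussianReal 0 v) := by
        refine integral_mono (g_integrable v hv hη).abs ((quad_integrable v hv).div_const η)
          fun x => g_abs_le (v : ℝ) hη x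
    _ = 2 * (v : ℝ) ^ 2 / η := by
        rw [integral_div, quad_integral v hv]

lemma condexp_key {Ω : Type*} [m : MeasurableSpace Ω] {P : Measure Ω} [IsProbabilityMeasure P]
    {F : ℝ → MeasurableSpace Ω} {W : ℝ → Ω → ℝ} (hW : IsStdBM P F W)
    {s t Δ η : ℝ} (hs : 0 ≤ s) (hst : s < t) (hΔ : t - s = Δ) (hη : 0 < η) :
    ∀ᵐ ω ∂P,
      |(P[(fun ω' => if η < |(W t ω' - W s ω') ^ 2 - Δ|
          then -((W t ω' - W s ω') ^ 2 - Δ) else 0) | F s]) ω| ≤ 2 * Δ ^ 2 / η := by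
  have hΔpos : 0 < Δ := hΔ ▸ sub_pos.mpr hst
  set v : ℝ≥0 := Δ.toNNReal with hvdef
  have hv : v ≠ 0 := by
    simp only [hvdef, ne_eq, Real.toNNReal_eq_zero, not_le, hΔpos]
  have hvΔ : (v : ℝ) = Δ := Real.coe_toNNReal _ hΔpos.le
  set g : ℝ → ℝ := fun x => if η < |x ^ 2 - Δ| then -(x ^ 2 - Δ) else 0 with hgdef
  set incr : Ω → ℝ := fun ω => W t ω - W s ω with hincrdef
  have hincr : Measurable incr := by
    have h1 : Measurable (W t) := ((hW.2.2.1 t).mono (hW.1 t) le_rfl)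
    have h2 : Measurable (W s) := ((hW.2.2.1 s).mono (hW.1 s) le_rfl)
    exact h1.sub h2
  have hlaw : Measure.map incr P = gaussianReal 0 v := by
    rw [hvdef, ← hΔ]
    exact (hW.2.2.2.2.2 s t hs hst.le).2
  have hindep := (hW.2.2.2.2.2 s t hs hst.le).1
  have hgmeas : Measurable g := g_measurable Δ η
  have hgintG : Integrable g (gaussianReal 0 v) := by
    rw [hgdef, ← hvΔ]
    exact g_integrable v hv hη
  have hint : Integrable (fun ω => g (incr ω)) P :=
    (integrable_map_measure hgmeas.aestronglyMeasurable hincr.aemeasurable).mp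
      (hlaw ▸ hgintG)
  have hval : ∫ ω, g (incr ω) ∂P = ∫ x, g x ∂(gaussianReal 0 v) := by
    rw [← hlaw, integral_map hincr.aemeasurable hgmeas.aestronglyMeasurable]
  have hsm : StronglyMeasurable[MeasurableSpace.comap incr inferInstance]
      (fun ω => g (incr ω)) :=
    (hgmeas.comp (Measurable.of_comap_le le_rfl)).stronglyMeasurable
  have hcond : P[(fun ω => g (incr ω)) | F s] =ᵐ[P] fun _ => ∫ ω, g (incr ω) ∂P :=
    condExp_indep_eq hincr.comap_le (hW.1 s) hsm hindep
  filter_upwards [hcond] with ω hω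
  have hfin : |(P[(fun ω => g (incr ω)) | F s]) ω| ≤ 2 * Δ ^ 2 / η := by
    rw [hω, hval]
    have h := g_integral_bound v hv hη
    rw [hvΔ] at h
    exact h
  exact hfin

end CompAux
/-- Compensator part in the proof of Lemma 4.4: with `Δ = 1/n`, `t_k = k/n`,
`U_k = (W_{t_k} - W_{t_{k-1}})² - Δ` and
`I_n^i = (1/(nΔ)) Σ_k Z^i_{t_{k-1}} E[-U_k 1_{|U_k| > η} | F_{t_{k-1}}]`,
one has `P(max_{1≤i≤p} |I_n^i| ≥ γ) ≤ 2CΔ/(γη)` for all `γ, η > 0`. -/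
theorem compensator_part (C : ℝ) (hC : 0 < C)
    {Ω : Type*} [m : MeasurableSpace Ω] (P : Measure Ω) [IsProbabilityMeasure P]
    (F : ℝ → MeasurableSpace Ω) (W : ℝ → Ω → ℝ) (hW : IsStdBM P F W)
    (n p : ℕ) (hn : 0 < n) (hp : 0 < p)
    (Z : Fin p → ℝ → Ω → ℝ)
    (hZad : ∀ i, ∀ t ∈ Set.Icc (0 : ℝ) 1, @Measurable _ _ (F t) _ (Z i t))
    (hZbd : ∀ i, ∀ t ∈ Set.Icc (0 : ℝ) 1, ∀ ω, |Z i t ω| ≤ C)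
    (γ η : ℝ) (hγ : 0 < γ) (hη : 0 < η) :
    P {ω | γ ≤ ⨆ i : Fin p, |(1 / ((n : ℝ) * (1 / n))) * ∑ k : Fin n,
        Z i ((k : ℕ) / n) ω *
          (P[(fun ω' =>
              if η < |(W (((k : ℕ) + 1) / n) ω' - W ((k : ℕ) / n) ω') ^ 2 - 1 / n|
                then -((W (((k : ℕ) + 1) / n) ω' - W ((k : ℕ) / n) ω') ^ 2 - 1 / n)
                else 0)|F ((k : ℕ) / n)]) ω|} ≤
      ENNReal.ofReal (2 * C * (1 / n) / (γ * η)) := by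
  have hnpos : (0 : ℝ) < n := Nat.cast_pos.mpr hn
  have hn' : (n : ℝ) ≠ 0 := ne_of_gt hnpos
  set B : ℝ := 2 * C * (1 / n) / η with hBdef
  haveI : Nonempty (Fin p) := Fin.pos_iff_nonempty.mp hp
  have hk : ∀ k : Fin n, ∀ᵐ ω ∂P,
      |(P[(fun ω' =>
          if η < |(W (((k : ℕ) + 1) / n) ω' - W ((k : ℕ) / n) ω') ^ 2 - 1 / n|
            then -((W (((k : ℕ) + 1) / n) ω' - W ((k : ℕ) / n) ω') ^ 2 - 1 / n)
            else 0)|F ((k : ℕ) / n)]) ω| ≤ 2 * (1 / (n : ℝ)) ^ 2 / η := by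
    intro k
    refine CompAux.condexp_key hW ?_ ?_ ?_ hη
    · positivity
    · rw [div_lt_div_iff_of_pos_right hnpos]
      exact lt_add_one _
    · rw [div_sub_div_same, add_sub_cancel_left]
  have hae := (MeasureTheory.ae_all_iff).mpr hk
  have hgood : ∀ᵐ ω ∂P, (⨆ i : Fin p, |(1 / ((n : ℝ) * (1 / n))) * ∑ k : Fin n,
      Z i ((k : ℕ) / n) ω *
        (P[(fun ω' =>
            if η < |(W (((k : ℕ) + 1) / n) ω' - W ((k : ℕ) / n) ω') ^ 2 - 1 / n|
              then -((W (((k : ℕ) + 1) / n) ω' - W ((k : ℕ) / n) ω') ^ 2 - 1 / n)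
              else 0)|F ((k : ℕ) / n)]) ω|) ≤ B := by
    filter_upwards [hae] with ω hω
    refine ciSup_le fun i => ?_
    have hpre : (1 : ℝ) / ((n : ℝ) * (1 / n)) = 1 := by
      field_simp
    rw [hpre, one_mul]
    calc |∑ k : Fin n, Z i ((k : ℕ) / n) ω *
          (P[(fun ω' =>
              if η < |(W (((k : ℕ) + 1) / n) ω' - W ((k : ℕ) / n) ω') ^ 2 - 1 / n|
                then -((W (((k : ℕ) + 1) / n) ω' - W ((k : ℕ) / n) ω') ^ 2 - 1 / n)
                else 0)|F ((k : ℕ) / n)]) ω|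
        ≤ ∑ k : Fin n, |Z i ((k : ℕ) / n) ω *
          (P[(fun ω' =>
              if η < |(W (((k : ℕ) + 1) / n) ω' - W ((k : ℕ) / n) ω') ^ 2 - 1 / n|
                then -((W (((k : ℕ) + 1) / n) ω' - W ((k : ℕ) / n) ω') ^ 2 - 1 / n)
                else 0)|F ((k : ℕ) / n)]) ω| := Finset.abs_sum_le_sum_abs _ _
      _ ≤ ∑ _k : Fin n, C * (2 * (1 / (n : ℝ)) ^ 2 / η) := by
          refine Finset.sum_le_sum fun k _ => ?_
          rw [abs_mul]
          have hmem : ((k : ℕ) : ℝ) / n ∈ Set.Icc (0 : ℝ) 1 := by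
            constructor
            · positivity
            · rw [div_le_one hnpos]
              exact_mod_cast k.isLt.le
          refine mul_le_mul (hZbd i _ hmem ω) (hω k) (abs_nonneg _) hC.le
      _ = B := by
          rw [Finset.sum_const, Finset.card_univ, Fintype.card_fin, nsmul_eq_mul, hBdef]
          field_simp
  by_cases hcase : γ ≤ B
  · refine le_trans (measure_mono (Set.subset_univ _)) ?_
    rw [measure_univ]
    refine ENNReal.one_le_ofReal.mpr ?_
    have heq : 2 * C * (1 / n) / (γ * η) = B / γ := by
      rw [hBdef, div_div, mul_comm η γ]
    rw [heq]
    exact (one_le_div hγ).mpr hcase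
  · have h0 : P {ω | γ ≤ ⨆ i : Fin p, |(1 / ((n : ℝ) * (1 / n))) * ∑ k : Fin n,
        Z i ((k : ℕ) / n) ω *
          (P[(fun ω' =>
              if η < |(W (((k : ℕ) + 1) / n) ω' - W ((k : ℕ) / n) ω') ^ 2 - 1 / n|
                then -((W (((k : ℕ) + 1) / n) ω' - W ((k : ℕ) / n) ω') ^ 2 - 1 / n)
                else 0)|F ((k : ℕ) / n)]) ω|} = 0 := by
      refine measure_mono_null (fun ω hω' hle => hcase (le_trans hω' hle)) ?_
      exact ae_iff.mp hgood
    rw [h0]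
    exact zero_le
end
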